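/- In a single-crossing election with an odd number of voters, the pairwise majority relation (x beats y if a strict majority of voters prefers x to y) is a strict linear order on the alternatives, namely it equals the preference order of the median voter. -/

import Mathlib

open Finset

lemma median_wins {C : Type*} [Fintype C] {z : ℕ} (hz : Odd z)
    (pref : Fin z → C → C → Prop) [∀ v, DecidableRel (pref v)]
    (hlin : ∀ v, IsStrictTotalOrder C (pref v))
    (hsc : ∀ x y : C, x ≠ y → ∀ i j k : Fin z, i < j → j < k →
      pref i x y → pref k x y → pref j x y)
    (m : Fin z) (hm : (m : ℕ) = z / 2) {x y : C} (hxy : x ≠ y)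
    (h : pref m x y) :
    (Finset.univ.filter fun v => pref v x y).card >
      (Finset.univ.filter fun v => pref v y x).card := by
  have asymm : ∀ v : Fin z, ∀ a b : C, pref v a b → ¬ pref v b a := fun v a b h1 h2 =>
    (hlin v).irrefl a ((hlin v).trans _ _ _ h1 h2)
  have hTneg : (Finset.univ.filter fun v => pref v y x)
      = Finset.univ.filter fun v => ¬ pref v x y := by
    apply filter_congr
    intro v _
    constructor
    · exact asymm v y x
    · intro hn
      rcases (haveI := hlin v; trichotomous (r := pref v) x y) with h1 | h1 | h1
      · exact absurd h1 hn
      · exact absurd h1.symm (Ne.symm hxy)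
      · exact h1
  have hsum : (Finset.univ.filter fun v => pref v x y).card
      + (Finset.univ.filter fun v => pref v y x).card = z := by
    rw [hTneg]
    simpa using Finset.card_filter_add_card_filter_not
      (s := (Finset.univ : Finset (Fin z))) (p := fun v => pref v x y)
  set S := Finset.univ.filter fun v => pref v x y with hS
  set T := Finset.univ.filter fun v => pref v y x with hT
  have hmT : m ∉ T := by simp [hT, asymm m x y h]
  have hside : (∀ v ∈ T, v < m) ∨ (∀ v ∈ T, m < v) := by
    by_contra hc
    push_neg at hc
    obtain ⟨⟨k, hk, hk2⟩, ⟨i, hi, hi2⟩⟩ := hc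
    have hik : i < m := lt_of_le_of_ne hi2 (fun h' => hmT (h' ▸ hi))
    have hmk : m < k := lt_of_le_of_ne hk2 (fun h' => hmT (h' ▸ hk))
    have hiT : pref i y x := by rw [hT] at hi; exact (mem_filter.mp hi).2
    have hkT : pref k y x := by rw [hT] at hk; exact (mem_filter.mp hk).2
    exact asymm m x y h (hsc y x hxy.symm i m k hik hmk hiT hkT)
  have hTle : T.card ≤ z / 2 := by
    rcases hside with hside | hside
    · have : T ⊆ Finset.Iio m := fun v hv => Finset.mem_Iio.mpr (hside v hv)
      calc T.card ≤ (Finset.Iio m).card := Finset.card_le_card this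
        _ = m := by simp
        _ = z / 2 := hm
    · have : T ⊆ Finset.Ioi m := fun v hv => Finset.mem_Ioi.mpr (hside v hv)
      have h2 : (Finset.Ioi m).card = z - 1 - m := by simp
      obtain ⟨t, ht⟩ := hz
      have hm' : (m : ℕ) = t := by omega
      calc T.card ≤ (Finset.Ioi m).card := Finset.card_le_card this
        _ = z - 1 - m := h2
        _ ≤ z / 2 := by omega
  obtain ⟨t, ht⟩ := hz
  omega

theorem stmt3 {C : Type*} [Fintype C] {z : ℕ} (hz : Odd z)
    (pref : Fin z → C → C → Prop) [∀ v, DecidableRel (pref v)]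
    (hlin : ∀ v, IsStrictTotalOrder C (pref v))
    (hsc : ∀ x y : C, x ≠ y → ∀ i j k : Fin z, i < j → j < k →
      pref i x y → pref k x y → pref j x y) :
    ∀ m : Fin z, (m : ℕ) = z / 2 →
      ((fun x y : C =>
          (Finset.univ.filter fun v => pref v x y).card >
          (Finset.univ.filter fun v => pref v y x).card) = pref m ∧
       IsStrictTotalOrder C (fun x y : C =>
          (Finset.univ.filter fun v => pref v x y).card >
          (Finset.univ.filter fun v => pref v y x).card)) := by
  intro m hm
  have heq : (fun x y : C =>
          (Finset.univ.filter fun v => pref v x y).card >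
          (Finset.univ.filter fun v => pref v y x).card) = pref m := by
    funext x y
    apply propext
    by_cases hxy : x = y
    · subst hxy
      constructor
      · intro h; exact absurd h (lt_irrefl _)
      · intro h; exact absurd h ((hlin m).irrefl x)
    · constructor
      · intro h
        rcases (haveI := hlin m; trichotomous (r := pref m) x y) with h1 | h1 | h1
        · exact h1
        · exact absurd h1 hxy
        · exact absurd h (Nat.lt_asymm (median_wins hz pref hlin hsc m hm (Ne.symm hxy) h1))
      · intro h
        exact median_wins hz pref hlin hsc m hm hxy h
  refine ⟨heq, ?_⟩
  rw [heq]
  exact hlin m
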